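/- Probability of the good event: let ε be a random vector in ℝ^n with i.i.d. Gaussian N(0, σ²) coordinates, σ > 0, and assume the columns of X are normalized so that ‖X_{kj}‖₂² = n for every (k,j) (equivalently, the diagonal entries of X^T X / n all equal 1). Let A > 2√2 and γ = A σ √(log p / n). Then the probability that (2/n)·max_{k,j} |X_{kj}^T ε| > γ is at most p^{1 − A²/8}. -/

import Mathlib

open MeasureTheory ProbabilityTheory Real NNReal
open scoped ENNReal

namespace LesAux

lemma pdf_mul {v1 v2 : ℝ≥0} (hv1 : v1 ≠ 0) (hv2 : v2 ≠ 0) (y x : ℝ) :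
    gaussianPDFReal 0 v1 x * gaussianPDFReal x v2 y
      = gaussianPDFReal 0 (v1 + v2) y *
        gaussianPDFReal ((v1 : ℝ) * y / ((v1 : ℝ) + v2)) (v1 * v2 / (v1 + v2)) x := by
  have h1 : (0:ℝ) < (v1 : ℝ) := lt_of_le_of_ne v1.coe_nonneg (by exact_mod_cast hv1.symm)
  have h2 : (0:ℝ) < (v2 : ℝ) := lt_of_le_of_ne v2.coe_nonneg (by exact_mod_cast hv2.symm)
  have h12 : (0:ℝ) < (v1 : ℝ) + v2 := by linarith
  have hw : ((v1 * v2 / (v1 + v2) : ℝ≥0) : ℝ) = (v1 : ℝ) * v2 / ((v1:ℝ) + v2) := by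
    push_cast; ring
  simp only [gaussianPDFReal]
  rw [mul_mul_mul_comm, ← Real.exp_add, mul_mul_mul_comm, ← Real.exp_add]
  have hc : (√(2 * π * v1))⁻¹ * (√(2 * π * v2))⁻¹
      = (√(2 * π * ((v1:ℝ) + v2)))⁻¹ * (√(2 * π * ((v1 * v2 / (v1 + v2) : ℝ≥0) : ℝ)))⁻¹ := by
    rw [← mul_inv, ← mul_inv, ← Real.sqrt_mul (by positivity), ← Real.sqrt_mul (by positivity)]
    rw [hw]
    congr 1
    field_simp
  have he : -(x - 0) ^ 2 / (2 * v1) + -(y - x) ^ 2 / (2 * v2)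
      = -(y - 0) ^ 2 / (2 * ((v1:ℝ) + v2)) +
        -(x - (v1 : ℝ) * y / ((v1 : ℝ) + v2)) ^ 2 / (2 * ((v1 * v2 / (v1 + v2) : ℝ≥0) : ℝ)) := by
    rw [hw]
    field_simp
    ring
  push_cast at hc he ⊢
  rw [hc, he]

end LesAux

namespace Les2
open LesAux

lemma lint_pdf {v1 v2 : ℝ≥0} (hv1 : v1 ≠ 0) (hv2 : v2 ≠ 0) (y : ℝ) :
    ∫⁻ x, gaussianPDF 0 v1 x * gaussianPDF x v2 y = gaussianPDF 0 (v1 + v2) y := by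
  have hw : (v1 * v2 / (v1 + v2) : ℝ≥0) ≠ 0 := by
    have h12 : v1 + v2 ≠ 0 := by simp [hv1, hv2]
    simp [div_eq_zero_iff, hv1, hv2, h12]
  calc ∫⁻ x, gaussianPDF 0 v1 x * gaussianPDF x v2 y
      = ∫⁻ x, ENNReal.ofReal (gaussianPDFReal 0 v1 x * gaussianPDFReal x v2 y) := by
        congr 1 with x
        rw [gaussianPDF, gaussianPDF, ← ENNReal.ofReal_mul (gaussianPDFReal_nonneg _ _ _)]
    _ = ∫⁻ x, ENNReal.ofReal (gaussianPDFReal 0 (v1 + v2) y) *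
          gaussianPDF ((v1 : ℝ) * y / ((v1 : ℝ) + v2)) (v1 * v2 / (v1 + v2)) x := by
        congr 1 with x
        rw [pdf_mul hv1 hv2, ENNReal.ofReal_mul (gaussianPDFReal_nonneg _ _ _)]
        rfl
    _ = ENNReal.ofReal (gaussianPDFReal 0 (v1 + v2) y) * 1 := by
        rw [lintegral_const_mul _ (measurable_gaussianPDF _ _),
          lintegral_gaussianPDF_eq_one _ hw]
    _ = gaussianPDF 0 (v1 + v2) y := by rw [mul_one]; rfl

lemma map_add_prod {v1 v2 : ℝ≥0} (hv1 : v1 ≠ 0) (hv2 : v2 ≠ 0) :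
    Measure.map (fun p : ℝ × ℝ => p.1 + p.2) ((gaussianReal 0 v1).prod (gaussianReal 0 v2))
      = gaussianReal 0 (v1 + v2) := by
  have hF : Measurable fun q : ℝ × ℝ => gaussianPDF 0 v1 q.1 * gaussianPDF q.1 v2 q.2 := by
    have : (fun q : ℝ × ℝ => gaussianPDF q.1 v2 q.2)
        = fun q : ℝ × ℝ => ENNReal.ofReal (gaussianPDFReal 0 v2 (q.2 - q.1)) := by
      funext q
      rw [gaussianPDF, gaussianPDFReal_sub, zero_add]
    refine Measurable.mul ((measurable_gaussianPDF 0 v1).comp measurable_fst) ?_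
    rw [this]
    exact ((measurable_gaussianPDFReal 0 v2).comp (measurable_snd.sub measurable_fst)).ennreal_ofReal
  ext s hs
  rw [Measure.map_apply measurable_add hs,
    Measure.prod_apply (measurable_add hs)]
  have hinner : ∀ x : ℝ, gaussianReal 0 v2 (Prod.mk x ⁻¹' ((fun p : ℝ × ℝ => p.1 + p.2) ⁻¹' s))
      = ∫⁻ y in s, gaussianPDF x v2 y := by
    intro x
    have : Prod.mk x ⁻¹' ((fun p : ℝ × ℝ => p.1 + p.2) ⁻¹' s) = (fun y => x + y) ⁻¹' s := rfl
    rw [this, ← Measure.map_apply (measurable_const_add x) hs,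
      gaussianReal_map_const_add, zero_add, gaussianReal_apply _ hv2]
  simp_rw [hinner]
  rw [gaussianReal_of_var_ne_zero _ hv1,
    lintegral_withDensity_eq_lintegral_mul _ (measurable_gaussianPDF _ _)
      (Measurable.lintegral_prod_right (f := fun x y => gaussianPDF x v2 y)
        (ν := volume.restrict s) ?_)]
  · calc ∫⁻ x, gaussianPDF 0 v1 x * ∫⁻ y in s, gaussianPDF x v2 y
        = ∫⁻ x, ∫⁻ y in s, gaussianPDF 0 v1 x * gaussianPDF x v2 y := by
          congr 1 with x
          rw [lintegral_const_mul _ (measurable_gaussianPDF _ _)]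
      _ = ∫⁻ y in s, ∫⁻ x, gaussianPDF 0 v1 x * gaussianPDF x v2 y := by
          exact lintegral_lintegral_swap hF.aemeasurable
      _ = ∫⁻ y in s, gaussianPDF 0 (v1 + v2) y := by
          congr 1 with y
          exact lint_pdf hv1 hv2 y
      _ = gaussianReal 0 (v1 + v2) s := (gaussianReal_apply _ (by simp [hv1, hv2]) s).symm
  · have : (fun q : ℝ × ℝ => gaussianPDF q.1 v2 q.2)
        = fun q : ℝ × ℝ => ENNReal.ofReal (gaussianPDFReal 0 v2 (q.2 - q.1)) := by
      funext q
      rw [gaussianPDF, gaussianPDFReal_sub, zero_add]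
    show Measurable fun q : ℝ × ℝ => gaussianPDF q.1 v2 q.2
    rw [this]
    exact ((measurable_gaussianPDFReal 0 v2).comp (measurable_snd.sub measurable_fst)).ennreal_ofReal

end Les2

namespace Les3
open Les2

variable {Ω : Type*} [MeasurableSpace Ω] {μ : Measure Ω}

lemma ae_zero_of_map_dirac {g : Ω → ℝ} (hg : Measurable g) [IsProbabilityMeasure μ]
    (h : μ.map g = gaussianReal 0 0) : g =ᵐ[μ] fun _ => 0 := by
  rw [gaussianReal_zero_var] at h
  have : μ (g ⁻¹' ({0}ᶜ)) = 0 := by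
    rw [← Measure.map_apply hg (measurableSet_singleton 0).compl, h,
      Measure.dirac_apply' _ (measurableSet_singleton 0).compl]
    simp
  refine Filter.eventually_of_mem (by exact this) ?_
  intro ω hω
  exact hω

lemma map_add_gauss [IsProbabilityMeasure μ] {f g : Ω → ℝ} (hf : Measurable f)
    (hg : Measurable g) (hfg : IndepFun f g μ) {v1 v2 : ℝ≥0}
    (h1 : μ.map f = gaussianReal 0 v1) (h2 : μ.map g = gaussianReal 0 v2) :
    μ.map (fun ω => f ω + g ω) = gaussianReal 0 (v1 + v2) := by
  by_cases hv1 : v1 = 0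
  · subst hv1
    have := ae_zero_of_map_dirac hf h1
    have heq : (fun ω => f ω + g ω) =ᵐ[μ] g := by filter_upwards [this] with ω h; simp [h]
    rw [Measure.map_congr heq, h2, zero_add]
  by_cases hv2 : v2 = 0
  · subst hv2
    have := ae_zero_of_map_dirac hg h2
    have heq : (fun ω => f ω + g ω) =ᵐ[μ] f := by filter_upwards [this] with ω h; simp [h]
    rw [Measure.map_congr heq, h1, add_zero]
  have hpair : μ.map (fun ω => (f ω, g ω)) = (μ.map f).prod (μ.map g) :=
    (indepFun_iff_map_prod_eq_prod_map_map hf.aemeasurable hg.aemeasurable).mp hfg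
  calc μ.map (fun ω => f ω + g ω)
      = Measure.map (fun p : ℝ × ℝ => p.1 + p.2) (μ.map (fun ω => (f ω, g ω))) := by
        rw [Measure.map_map measurable_add (hf.prodMk hg)]
        rfl
    _ = gaussianReal 0 (v1 + v2) := by
        rw [hpair, h1, h2, map_add_prod hv1 hv2]

lemma map_sum_gauss [IsProbabilityMeasure μ] {n : ℕ} {f : Fin n → Ω → ℝ}
    (hf : ∀ i, Measurable (f i)) {v : Fin n → ℝ≥0}
    (hd : ∀ i, μ.map (f i) = gaussianReal 0 (v i))
    (hindep : iIndepFun (m := fun _ => Real.measurableSpace) f μ) (s : Finset (Fin n)) :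
    μ.map (fun ω => ∑ i ∈ s, f i ω) = gaussianReal 0 (∑ i ∈ s, v i) := by
  classical
  induction s using Finset.induction_on with
  | empty => simp [Measure.map_const]
  | insert a s hns ih =>
    rw [Finset.sum_insert hns]
    have hmeas : Measurable (fun ω => ∑ i ∈ s, f i ω) :=
      Finset.measurable_sum s (fun i _ => hf i)
    have hind : IndepFun (f a) (fun ω => ∑ i ∈ s, f i ω) μ := by
      have h := (hindep.indepFun_finset_sum_of_notMem hf hns).symm
      have he : (fun ω => ∑ i ∈ s, f i ω) = ∑ j ∈ s, f j := by
        funext ω; simp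
      rw [he]
      exact h
    have := map_add_gauss (hf a) hmeas hind (hd a) ih
    simpa [Finset.sum_insert hns] using
      map_add_gauss (hf a) hmeas hind (hd a) ih

end Les3

namespace Les4
open Real Set

variable {v : ℝ≥0}

lemma neg_symm (hv : v ≠ 0) (t : ℝ) :
    gaussianReal 0 v (Set.Iio (-t)) = gaussianReal 0 v (Set.Ioi t) := by
  have h1 : (NNReal.mk ((-1:ℝ)^2) (sq_nonneg _)) = 1 := by ext; norm_num
  have hmap := gaussianReal_map_const_mul (μ := (0:ℝ)) (v := v) (-1)
  rw [h1, one_mul, mul_zero] at hmap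
  have : Set.Iio (-t) = (fun x : ℝ => -1 * x) ⁻¹' (Set.Ioi t) := by
    ext x; simp only [Set.mem_Iio, Set.mem_preimage, Set.mem_Ioi]
    constructor <;> intro h <;> linarith
  rw [this, ← Measure.map_apply (by fun_prop) measurableSet_Ioi, hmap]

lemma half (hv : v ≠ 0) : gaussianReal 0 v (Set.Ioi 0) = 1 / 2 := by
  have hsing : gaussianReal 0 v {(0:ℝ)} = 0 :=
    gaussianReal_absolutelyContinuous 0 hv (volume_singleton)
  have hcompl : gaussianReal 0 v ({(0:ℝ)}ᶜ) = 1 := by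
    rw [measure_compl (measurableSet_singleton 0) (measure_ne_top _ _), hsing,
      measure_univ, tsub_zero]
  have hunion : Set.Iio (0:ℝ) ∪ Set.Ioi 0 = {(0:ℝ)}ᶜ := by
    ext x; simp [lt_or_lt_iff_ne]
  have hadd : gaussianReal 0 v (Set.Iio 0) + gaussianReal 0 v (Set.Ioi 0) = 1 := by
    rw [← measure_union (by
      rw [Set.disjoint_left]
      intro a h1 h2
      simp only [Set.mem_Iio] at h1
      simp only [Set.mem_Ioi] at h2
      linarith) measurableSet_Ioi, hunion, hcompl]
  have hneg := neg_symm hv 0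
  rw [neg_zero] at hneg
  rw [hneg, ← two_mul] at hadd
  rw [ENNReal.eq_div_iff two_ne_zero ENNReal.ofNat_ne_top, mul_comm]
  rw [mul_comm]
  exact hadd

lemma shift_half (hv : v ≠ 0) (t : ℝ) : gaussianReal t v (Set.Ioi t) = 1 / 2 := by
  have hmap := gaussianReal_map_add_const (μ := (0:ℝ)) (v := v) t
  rw [zero_add] at hmap
  rw [← hmap, Measure.map_apply (measurable_add_const t) measurableSet_Ioi]
  have : (· + t) ⁻¹' (Set.Ioi t) = Set.Ioi (0:ℝ) := by
    ext x; simp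
  rw [this, half hv]

lemma one_side (hv : v ≠ 0) {t : ℝ} (ht : 0 ≤ t) :
    gaussianReal 0 v (Set.Ioi t)
      ≤ ENNReal.ofReal (rexp (-t ^ 2 / (2 * v))) * (1 / 2) := by
  have hvpos : (0:ℝ) < v := lt_of_le_of_ne v.coe_nonneg (by exact_mod_cast hv.symm)
  have hpt : ∀ x ∈ Set.Ioi t, gaussianPDF 0 v x
      ≤ ENNReal.ofReal (rexp (-t ^ 2 / (2 * v))) * gaussianPDF t v x := by
    intro x hx
    rw [gaussianPDF, gaussianPDF, ← ENNReal.ofReal_mul (exp_nonneg _)]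
    refine ENNReal.ofReal_le_ofReal ?_
    simp only [gaussianPDFReal, sub_zero]
    rw [mul_left_comm, ← Real.exp_add]
    refine mul_le_mul_of_nonneg_left (Real.exp_le_exp.mpr ?_) (by positivity)
    have hx' : t < x := hx
    rw [← add_div, div_le_div_iff_of_pos_right (by positivity)]
    nlinarith
  calc gaussianReal 0 v (Set.Ioi t) = ∫⁻ x in Set.Ioi t, gaussianPDF 0 v x :=
        gaussianReal_apply 0 hv _
    _ ≤ ∫⁻ x in Set.Ioi t, ENNReal.ofReal (rexp (-t ^ 2 / (2 * v))) * gaussianPDF t v x :=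
        setLIntegral_mono ((measurable_gaussianPDF t v).const_mul _) hpt
    _ = ENNReal.ofReal (rexp (-t ^ 2 / (2 * v))) * ∫⁻ x in Set.Ioi t, gaussianPDF t v x :=
        lintegral_const_mul _ (measurable_gaussianPDF t v)
    _ = ENNReal.ofReal (rexp (-t ^ 2 / (2 * v))) * (1 / 2) := by
        rw [← gaussianReal_apply t hv, shift_half hv]

lemma gauss_tail (hv : v ≠ 0) {t : ℝ} (ht : 0 ≤ t) :
    gaussianReal 0 v {x : ℝ | t < |x|} ≤ ENNReal.ofReal (rexp (-t ^ 2 / (2 * v))) := by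
  have hsub : {x : ℝ | t < |x|} ⊆ Set.Iio (-t) ∪ Set.Ioi t := by
    intro x hx
    have hx' : t < |x| := hx
    rcases lt_abs.mp hx' with h | h
    · exact Or.inr h
    · refine Or.inl ?_
      simp only [Set.mem_Iio]
      linarith
  calc gaussianReal 0 v {x : ℝ | t < |x|}
      ≤ gaussianReal 0 v (Set.Iio (-t) ∪ Set.Ioi t) := measure_mono hsub
    _ ≤ gaussianReal 0 v (Set.Iio (-t)) + gaussianReal 0 v (Set.Ioi t) := measure_union_le _ _
    _ = gaussianReal 0 v (Set.Ioi t) + gaussianReal 0 v (Set.Ioi t) := by rw [neg_symm hv]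
    _ ≤ ENNReal.ofReal (rexp (-t ^ 2 / (2 * v))) * (1 / 2)
        + ENNReal.ofReal (rexp (-t ^ 2 / (2 * v))) * (1 / 2) :=
        add_le_add (one_side hv ht) (one_side hv ht)
    _ = ENNReal.ofReal (rexp (-t ^ 2 / (2 * v))) := by
        rw [← mul_add]
        have : (1:ℝ≥0∞) / 2 + 1 / 2 = 1 := ENNReal.add_halves 1
        rw [this, mul_one]

end Les4


/-- **Probability of the good event.**
Let `ε` be a random vector in `ℝ^n` with i.i.d. Gaussian `N(0, σ²)` coordinates
and assume the columns of `X` satisfy `‖X kj‖₂² = n` for every `(k,j)`.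
Let `A > 2√2` and `γ = A σ √(log p / n)`.  Then the probability that
`(2/n) max_{k,j} |X kjᵀ ε| > γ` is at most `p^{1 - A²/8}`. -/
theorem les_good_event_prob (n K : ℕ) (hn : 0 < n) (hK : 0 < K)
    (p : Fin K → ℕ) (hp : ∀ k, 1 ≤ p k)
    (P : ℕ) (hP : P = ∑ k : Fin K, p k)
    (X : Fin n → (Σ k : Fin K, Fin (p k)) → ℝ)
    (hcol : ∀ j : Σ k : Fin K, Fin (p k), ∑ i : Fin n, (X i j) ^ 2 = (n : ℝ))
    (σ : ℝ) (hσ : 0 < σ)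
    {Ω : Type*} [MeasurableSpace Ω] (μ : Measure Ω) [IsProbabilityMeasure μ]
    (ε : Ω → Fin n → ℝ)
    (hmeas : ∀ i, Measurable fun ω => ε ω i)
    (hdist : ∀ i, Measure.map (fun ω => ε ω i) μ = gaussianReal 0 (σ ^ 2).toNNReal)
    (hindep : iIndepFun (m := fun _ : Fin n => Real.measurableSpace) (fun i ω => ε ω i) μ)
    (A : ℝ) (hA : 2 * Real.sqrt 2 < A)
    (γ : ℝ) (hγ : γ = A * σ * Real.sqrt (Real.log P / n)) :
    μ {ω | ∃ j : Σ k : Fin K, Fin (p k), γ < (2 / (n : ℝ)) * |∑ i : Fin n, X i j * ε ω i|} ≤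
      ENNReal.ofReal ((P : ℝ) ^ ((1 : ℝ) - A ^ 2 / 8)) := by
  classical
  have hn' : (0:ℝ) < n := by exact_mod_cast hn
  have hP1 : 1 ≤ P := by
    rw [hP]
    calc 1 ≤ K := hK
    _ = ∑ _k : Fin K, 1 := by simp
    _ ≤ ∑ k : Fin K, p k := Finset.sum_le_sum fun k _ => hp k
  have hPpos : (0:ℝ) < P := by exact_mod_cast hP1
  have hlogP : 0 ≤ Real.log P := Real.log_nonneg (by exact_mod_cast hP1)
  have hApos : (0:ℝ) < A := lt_trans (by positivity) hA
  have hγ0 : 0 ≤ γ := by rw [hγ]; positivity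
  set t : ℝ := γ * ((n:ℝ) / 2) with hts
  have ht0 : 0 ≤ t := by positivity
  -- the random variables
  set S : (Σ k : Fin K, Fin (p k)) → Ω → ℝ :=
    fun j ω => ∑ i : Fin n, X i j * ε ω i with hS
  have hSmeas : ∀ j, Measurable (S j) := fun j =>
    Finset.measurable_sum _ fun i _ => (hmeas i).const_mul _
  -- variance
  set V : (Σ k : Fin K, Fin (p k)) → ℝ≥0 :=
    fun j => ∑ i : Fin n, Real.toNNReal ((X i j)^2) * (σ ^ 2).toNNReal with hV
  have hVcoe : ∀ j, ((V j : ℝ≥0) : ℝ) = n * σ ^ 2 := by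
    intro j
    rw [hV, NNReal.coe_sum]
    have hterm : ∀ i : Fin n,
        ((Real.toNNReal ((X i j)^2) * (σ ^ 2).toNNReal : ℝ≥0) : ℝ) = (X i j)^2 * σ^2 :=
      fun i => by
        rw [NNReal.coe_mul, Real.coe_toNNReal _ (sq_nonneg _), Real.coe_toNNReal _ (sq_nonneg _)]
    rw [Finset.sum_congr rfl (fun i _ => hterm i), ← Finset.sum_mul, hcol j]
  have hVne : ∀ j, V j ≠ 0 := by
    intro j h
    have := hVcoe j
    rw [h] at this
    simp only [NNReal.coe_zero] at this
    nlinarith [mul_pos hn' (pow_pos hσ 2)]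
  -- law of S j
  have hlaw : ∀ j, μ.map (S j) = gaussianReal 0 (V j) := by
    intro j
    refine Les3.map_sum_gauss (fun i => (hmeas i).const_mul _) ?_ ?_ Finset.univ
    · intro i
      have : (fun ω => X i j * ε ω i) = (fun x => X i j * x) ∘ (fun ω => ε ω i) := rfl
      rw [this, ← Measure.map_map (measurable_const_mul _) (hmeas i), hdist i,
        gaussianReal_map_const_mul, mul_zero]
      congr 1
      exact NNReal.coe_inj.mp (by simp [Real.coe_toNNReal _ (sq_nonneg (X i j))])
    · exact hindep.comp (fun i x => X i j * x) (fun i => measurable_const_mul _)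
  -- the per-column bound
  have hbound : ∀ j, μ {ω | γ < (2 / (n : ℝ)) * |S j ω|}
      ≤ ENNReal.ofReal ((P : ℝ) ^ (-(A ^ 2 / 8))) := by
    intro j
    have hset : {ω | γ < (2 / (n : ℝ)) * |S j ω|} = S j ⁻¹' {x : ℝ | t < |x|} := by
      ext ω
      simp only [Set.mem_setOf_eq, Set.mem_preimage]
      have h2 : (2:ℝ) / n * |S j ω| = |S j ω| / ((n:ℝ)/2) := by field_simp
      rw [h2, lt_div_iff₀ (by positivity : (0:ℝ) < (n:ℝ)/2)]
    have hmeasset : MeasurableSet {x : ℝ | t < |x|} :=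
      measurableSet_lt measurable_const measurable_abs
    rw [hset, ← Measure.map_apply (hSmeas j) hmeasset, hlaw j]
    refine le_trans (Les4.gauss_tail (hVne j) ht0) ?_
    refine le_of_eq ?_
    congr 1
    rw [hVcoe j]
    have hexp : -t ^ 2 / (2 * ((n:ℝ) * σ ^ 2)) = Real.log P * (-(A ^ 2 / 8)) := by
      rw [hts, hγ]
      rw [mul_pow, mul_pow, Real.sq_sqrt (by positivity)]
      field_simp
      ring
    rw [hexp, ← Real.rpow_def_of_pos hPpos]
  -- union bound
  have hcard : Fintype.card (Σ k : Fin K, Fin (p k)) = P := by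
    rw [hP]
    simp [Fintype.card_sigma]
  calc μ {ω | ∃ j : Σ k : Fin K, Fin (p k), γ < (2 / (n : ℝ)) * |∑ i : Fin n, X i j * ε ω i|}
      = μ (⋃ j : Σ k : Fin K, Fin (p k), {ω | γ < (2 / (n : ℝ)) * |S j ω|}) := by
        congr 1
        ext ω
        simp only [Set.mem_setOf_eq, Set.mem_iUnion]
        rfl
    _ ≤ ∑' j : Σ k : Fin K, Fin (p k), μ {ω | γ < (2 / (n : ℝ)) * |S j ω|} :=
        measure_iUnion_le _
    _ = ∑ j : Σ k : Fin K, Fin (p k), μ {ω | γ < (2 / (n : ℝ)) * |S j ω|} := tsum_fintype _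
    _ ≤ ∑ _j : Σ k : Fin K, Fin (p k), ENNReal.ofReal ((P : ℝ) ^ (-(A ^ 2 / 8))) :=
        Finset.sum_le_sum fun j _ => hbound j
    _ = (P : ℝ≥0∞) * ENNReal.ofReal ((P : ℝ) ^ (-(A ^ 2 / 8))) := by
        rw [Finset.sum_const, Finset.card_univ, hcard, nsmul_eq_mul]
    _ = ENNReal.ofReal ((P : ℝ) ^ ((1 : ℝ) - A ^ 2 / 8)) := by
        rw [← ENNReal.ofReal_natCast P, ← ENNReal.ofReal_mul (by positivity)]
        congr 1
        rw [show (1:ℝ) - A ^ 2 / 8 = 1 + (-(A ^ 2 / 8)) by ring,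
          Real.rpow_add hPpos, Real.rpow_one]
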